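/- arXiv:2204.13552 — 3 statements merged into one kernel-verified Lean document; each statement's English description precedes it below -/
import Mathlib

section
/- Let h : ℝ → ℝ be differentiable with h'(y) ≥ c for all y ∈ ℝ, for some constant c > 0. Let (Ω, 𝔽, P) be a probability space, ν a finite Borel measure on (0,1), σ¹, σ² : (0,1) → ℝ measurable with |σ¹(p)| ≤ 1 and |σ²(p)| ≤ 1 for ν-a.e. p, x ∈ ℝ^q, and β : (0,1) → ℝ^q ν-integrable; let β̂ₙ : Ω × (0,1) → ℝ^q be jointly measurable with β̂ₙ(ω,·) ν-integrable for P-a.e. ω. Define T¹ = ∫₀¹ h⁻¹(⟨x, β(p)⟩) σ¹(p) dν(p) and T² = ∫₀¹ h⁻¹(⟨x, β(p)⟩) σ²(p) dν(p), and assume T² ≠ 0. If for every ε > 0, P(∫₀¹ ‖β̂ₙ(ω,p) − β(p)‖ dν(p) > ε) → 0 as n → ∞, then the ratio estimator θ̂ₙ(ω) = (∫₀¹ h⁻¹(⟨x, β̂ₙ(ω,p)⟩) σ¹(p) dν(p)) / (∫₀¹ h⁻¹(⟨x, β̂ₙ(ω,p)⟩) σ²(p) dν(p)) converges in probability to θ(x)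 = T¹/T². -/
open MeasureTheory Filter


lemma aux_growth {h : ℝ → ℝ} {c : ℝ} (hc : 0 < c) (hdiff : Differentiable ℝ h)
    (hderiv : ∀ y : ℝ, c ≤ deriv h y) {a b : ℝ} (hab : a ≤ b) :
    c * (b - a) ≤ h b - h a := by
  have hd2 : Differentiable ℝ (fun y : ℝ => c * y) := differentiable_id.const_mul c
  have hmono : Monotone (fun y => h y - c * y) := by
    apply monotone_of_deriv_nonneg (hdiff.sub hd2)
    intro y
    have hder : deriv (fun y => h y - c * y) y = deriv h y - c := by
      rw [deriv_fun_sub (hdiff y) (hd2 y)]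
      rw [deriv_const_mul _ differentiableAt_id]; simp
    rw [show (h - fun y => c * y) = (fun y => h y - c * y) from rfl, hder]
    linarith [hderiv y]
  have := hmono hab
  simp only at this
  linarith

lemma aux_abs {h : ℝ → ℝ} {c : ℝ} (hc : 0 < c) (hdiff : Differentiable ℝ h)
    (hderiv : ∀ y : ℝ, c ≤ deriv h y) (a b : ℝ) :
    c * |a - b| ≤ |h a - h b| := by
  rcases le_total a b with hab | hab
  · have h1 := aux_growth hc hdiff hderiv hab
    have h2 : 0 ≤ h b - h a := le_trans (mul_nonneg hc.le (sub_nonneg.2 hab)) h1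
    rw [abs_sub_comm a b, abs_of_nonneg (sub_nonneg.2 hab), abs_sub_comm (h a),
      abs_of_nonneg h2]
    exact h1
  · have h1 := aux_growth hc hdiff hderiv hab
    have h2 : 0 ≤ h a - h b := le_trans (mul_nonneg hc.le (sub_nonneg.2 hab)) h1
    rw [abs_of_nonneg (sub_nonneg.2 hab), abs_of_nonneg h2]
    exact h1

lemma aux_surj {h : ℝ → ℝ} {c : ℝ} (hc : 0 < c) (hdiff : Differentiable ℝ h)
    (hderiv : ∀ y : ℝ, c ≤ deriv h y) : Function.Surjective h := by
  apply hdiff.continuous.surjective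
  · refine tendsto_atTop_mono' atTop ?_
      (tendsto_atTop_add_const_right _ (h 0) (tendsto_id.const_mul_atTop hc))
    filter_upwards [eventually_ge_atTop (0:ℝ)] with y hy
    have := aux_growth hc hdiff hderiv hy
    simp only [id_eq]
    linarith
  · refine tendsto_atBot_mono' atBot ?_
      (tendsto_atBot_add_const_right _ (h 0) (tendsto_id.const_mul_atBot hc))
    filter_upwards [eventually_le_atBot (0:ℝ)] with y hy
    have := aux_growth hc hdiff hderiv hy
    simp only [id_eq]
    linarith

lemma aux_lip {h : ℝ → ℝ} {c : ℝ} (hc : 0 < c) (hdiff : Differentiable ℝ h)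
    (hderiv : ∀ y : ℝ, c ≤ deriv h y) (a b : ℝ) :
    |Function.invFun h a - Function.invFun h b| ≤ (1 / c) * |a - b| := by
  have hri := Function.rightInverse_invFun (aux_surj hc hdiff hderiv)
  have key := aux_abs hc hdiff hderiv (Function.invFun h a) (Function.invFun h b)
  rw [hri a, hri b] at key
  calc |Function.invFun h a - Function.invFun h b|
      = (1 / c) * (c * |Function.invFun h a - Function.invFun h b|) := by field_simp
    _ ≤ (1 / c) * |a - b| := mul_le_mul_of_nonneg_left key (by positivity)

lemma aux_invFun_cont {h : ℝ → ℝ} {c : ℝ} (hc : 0 < c) (hdiff : Differentiable ℝ h)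
    (hderiv : ∀ y : ℝ, c ≤ deriv h y) : Continuous (Function.invFun h) := by
  apply LipschitzWith.continuous (K := Real.toNNReal (1 / c))
  apply LipschitzWith.of_dist_le_mul
  intro a b
  rw [Real.dist_eq, Real.dist_eq, Real.coe_toNNReal _ (by positivity)]
  exact aux_lip hc hdiff hderiv a b

lemma aux_intble {q : ℕ} {h : ℝ → ℝ} {c : ℝ} (hc : 0 < c) (hdiff : Differentiable ℝ h)
    (hderiv : ∀ y : ℝ, c ≤ deriv h y)
    (ν : Measure (Set.Ioo (0:ℝ) 1)) [IsFiniteMeasure ν]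
    (σ : Set.Ioo (0:ℝ) 1 → ℝ) (hσmeas : Measurable σ) (hσ : ∀ᵐ p ∂ν, |σ p| ≤ 1)
    (x : EuclideanSpace ℝ (Fin q))
    (δ : Set.Ioo (0:ℝ) 1 → EuclideanSpace ℝ (Fin q)) (hδ : Integrable δ ν) :
    Integrable (fun p => Function.invFun h ((inner ℝ x (δ p) : ℝ)) * σ p) ν := by
  have hcont : Continuous (fun v : EuclideanSpace ℝ (Fin q) =>
      Function.invFun h ((inner ℝ x v : ℝ))) :=
    (aux_invFun_cont hc hdiff hderiv).comp (continuous_const.inner continuous_id)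
  apply Integrable.mono' ((integrable_const (|Function.invFun h 0|)).add
    (hδ.norm.const_mul (‖x‖ / c)))
  · exact (hcont.comp_aestronglyMeasurable hδ.1).mul hσmeas.aestronglyMeasurable
  · filter_upwards [hσ] with p hp
    rw [norm_mul]
    have hxb : |(inner ℝ x (δ p) : ℝ)| ≤ ‖x‖ * ‖δ p‖ := abs_real_inner_le_norm x (δ p)
    have hlip := aux_lip hc hdiff hderiv ((inner ℝ x (δ p) : ℝ)) 0
    have habs : |Function.invFun h ((inner ℝ x (δ p) : ℝ))| - |Function.invFun h 0| ≤
        |Function.invFun h ((inner ℝ x (δ p) : ℝ)) - Function.invFun h 0| :=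
      abs_sub_abs_le_abs_sub _ _
    have h2 : (1 / c) * |(inner ℝ x (δ p) : ℝ) - 0| ≤ (1 / c) * (‖x‖ * ‖δ p‖) := by
      rw [sub_zero]
      exact mul_le_mul_of_nonneg_left hxb (by positivity)
    have h3 : ‖Function.invFun h ((inner ℝ x (δ p) : ℝ))‖ ≤
        |Function.invFun h 0| + ‖x‖ / c * ‖δ p‖ := by
      rw [Real.norm_eq_abs]
      have : (1 / c) * (‖x‖ * ‖δ p‖) = ‖x‖ / c * ‖δ p‖ := by ring
      linarith [this ▸ h2]
    calc ‖Function.invFun h ((inner ℝ x (δ p) : ℝ))‖ * ‖σ p‖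
        ≤ ‖Function.invFun h ((inner ℝ x (δ p) : ℝ))‖ * 1 :=
          mul_le_mul_of_nonneg_left (by rw [Real.norm_eq_abs]; exact hp) (norm_nonneg _)
      _ = ‖Function.invFun h ((inner ℝ x (δ p) : ℝ))‖ := mul_one _
      _ ≤ |Function.invFun h 0| + ‖x‖ / c * ‖δ p‖ := h3

lemma aux_bound {q : ℕ} {h : ℝ → ℝ} {c : ℝ} (hc : 0 < c) (hdiff : Differentiable ℝ h)
    (hderiv : ∀ y : ℝ, c ≤ deriv h y)
    (ν : Measure (Set.Ioo (0:ℝ) 1)) [IsFiniteMeasure ν]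
    (σ : Set.Ioo (0:ℝ) 1 → ℝ) (hσmeas : Measurable σ) (hσ : ∀ᵐ p ∂ν, |σ p| ≤ 1)
    (x : EuclideanSpace ℝ (Fin q))
    (β γ : Set.Ioo (0:ℝ) 1 → EuclideanSpace ℝ (Fin q))
    (hβ : Integrable β ν) (hγ : Integrable γ ν) :
    |(∫ p, Function.invFun h ((inner ℝ x (γ p) : ℝ)) * σ p ∂ν) -
     (∫ p, Function.invFun h ((inner ℝ x (β p) : ℝ)) * σ p ∂ν)| ≤
    (‖x‖ / c + 1) * ∫ p, ‖γ p - β p‖ ∂ν := by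
  have hiγ := aux_intble hc hdiff hderiv ν σ hσmeas hσ x γ hγ
  have hiβ := aux_intble hc hdiff hderiv ν σ hσmeas hσ x β hβ
  rw [← integral_sub hiγ hiβ]
  have hle : ∀ᵐ p ∂ν, ‖Function.invFun h ((inner ℝ x (γ p) : ℝ)) * σ p -
      Function.invFun h ((inner ℝ x (β p) : ℝ)) * σ p‖ ≤
      (‖x‖ / c + 1) * ‖γ p - β p‖ := by
    filter_upwards [hσ] with p hp
    have key : Function.invFun h ((inner ℝ x (γ p) : ℝ)) * σ p -
        Function.invFun h ((inner ℝ x (β p) : ℝ)) * σ p =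
        (Function.invFun h ((inner ℝ x (γ p) : ℝ)) -
         Function.invFun h ((inner ℝ x (β p) : ℝ))) * σ p := by ring
    rw [key, Real.norm_eq_abs, abs_mul]
    have hlip := aux_lip hc hdiff hderiv ((inner ℝ x (γ p) : ℝ)) ((inner ℝ x (β p) : ℝ))
    have hxb : |(inner ℝ x (γ p) : ℝ) - (inner ℝ x (β p) : ℝ)| ≤ ‖x‖ * ‖γ p - β p‖ := by
      rw [← inner_sub_right]
      exact abs_real_inner_le_norm x (γ p - β p)
    have h2 : (1 / c) * |(inner ℝ x (γ p) : ℝ) - (inner ℝ x (β p) : ℝ)| ≤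
        (1 / c) * (‖x‖ * ‖γ p - β p‖) := mul_le_mul_of_nonneg_left hxb (by positivity)
    have h3 : (1 / c) * (‖x‖ * ‖γ p - β p‖) ≤ (‖x‖ / c + 1) * ‖γ p - β p‖ := by
      have : (1 / c) * (‖x‖ * ‖γ p - β p‖) = (‖x‖ / c) * ‖γ p - β p‖ := by ring
      rw [this]
      nlinarith [norm_nonneg (γ p - β p)]
    calc |Function.invFun h ((inner ℝ x (γ p) : ℝ)) -
          Function.invFun h ((inner ℝ x (β p) : ℝ))| * |σ p|
        ≤ |Function.invFun h ((inner ℝ x (γ p) : ℝ)) -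
          Function.invFun h ((inner ℝ x (β p) : ℝ))| * 1 :=
          mul_le_mul_of_nonneg_left hp (abs_nonneg _)
      _ = |Function.invFun h ((inner ℝ x (γ p) : ℝ)) -
          Function.invFun h ((inner ℝ x (β p) : ℝ))| := mul_one _
      _ ≤ (‖x‖ / c + 1) * ‖γ p - β p‖ := le_trans hlip (le_trans h2 h3)
  calc |∫ p, (Function.invFun h ((inner ℝ x (γ p) : ℝ)) * σ p -
        Function.invFun h ((inner ℝ x (β p) : ℝ)) * σ p) ∂ν|
      ≤ ∫ p, ‖Function.invFun h ((inner ℝ x (γ p) : ℝ)) * σ p -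
        Function.invFun h ((inner ℝ x (β p) : ℝ)) * σ p‖ ∂ν := by
        rw [← Real.norm_eq_abs]; exact norm_integral_le_integral_norm _
    _ ≤ ∫ p, (‖x‖ / c + 1) * ‖γ p - β p‖ ∂ν :=
        integral_mono_ae (hiγ.sub hiβ).norm ((hγ.sub hβ).norm.const_mul _) hle
    _ = (‖x‖ / c + 1) * ∫ p, ‖γ p - β p‖ ∂ν := integral_const_mul _ _

/-- Consistency part of Corollary 2 of the paper: consistency of the plug-in
estimator of a ratio of two conditional L-functionals in a transformed linear
quantile regression model with link function h. -/
theorem stmt_6 {q : ℕ} {Ω : Type*} [MeasurableSpace Ω]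
    (P : Measure Ω) [IsProbabilityMeasure P]
    (h : ℝ → ℝ) (c : ℝ) (hc : 0 < c)
    (hdiff : Differentiable ℝ h) (hderiv : ∀ y : ℝ, c ≤ deriv h y)
    (ν : Measure (Set.Ioo (0:ℝ) 1)) [IsFiniteMeasure ν]
    (σ1 σ2 : Set.Ioo (0:ℝ) 1 → ℝ)
    (hσ1meas : Measurable σ1) (hσ2meas : Measurable σ2)
    (hσ1 : ∀ᵐ p ∂ν, |σ1 p| ≤ 1) (hσ2 : ∀ᵐ p ∂ν, |σ2 p| ≤ 1)
    (x : EuclideanSpace ℝ (Fin q))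
    (β : Set.Ioo (0:ℝ) 1 → EuclideanSpace ℝ (Fin q)) (hβ : Integrable β ν)
    (βhat : ℕ → Ω × Set.Ioo (0:ℝ) 1 → EuclideanSpace ℝ (Fin q))
    (hβhatmeas : ∀ n, Measurable (βhat n))
    (hβhatint : ∀ n, ∀ᵐ ω ∂P, Integrable (fun p => βhat n (ω, p)) ν)
    (hT2 : (∫ p, Function.invFun h ((inner ℝ x (β p) : ℝ)) * σ2 p ∂ν) ≠ 0)
    (hcons : ∀ ε : ℝ, 0 < ε →
      Tendsto (fun n => P {ω | ε < ∫ p, ‖βhat n (ω, p) - β p‖ ∂ν})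
        atTop (nhds 0)) :
    TendstoInMeasure P
      (fun n ω =>
        (∫ p, Function.invFun h ((inner ℝ x (βhat n (ω, p)) : ℝ)) * σ1 p ∂ν) /
        (∫ p, Function.invFun h ((inner ℝ x (βhat n (ω, p)) : ℝ)) * σ2 p ∂ν))
      atTop
      (fun _ =>
        (∫ p, Function.invFun h ((inner ℝ x (β p) : ℝ)) * σ1 p ∂ν) /
        (∫ p, Function.invFun h ((inner ℝ x (β p) : ℝ)) * σ2 p ∂ν)) := by
  set T1 : ℝ := ∫ p, Function.invFun h ((inner ℝ x (β p) : ℝ)) * σ1 p ∂ν with hT1def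
  set T2 : ℝ := ∫ p, Function.invFun h ((inner ℝ x (β p) : ℝ)) * σ2 p ∂ν with hT2def
  rw [tendstoInMeasure_iff_dist]
  intro ε hε
  have hcontdiv : ContinuousAt (fun ab : ℝ × ℝ => ab.1 / ab.2) (T1, T2) :=
    ContinuousAt.div continuousAt_fst continuousAt_snd hT2
  rw [Metric.continuousAt_iff] at hcontdiv
  obtain ⟨δ, hδpos, hδ⟩ := hcontdiv ε hε
  set K : ℝ := ‖x‖ / c + 1 with hKdef
  have hKpos : 0 < K := by positivity
  set δ' : ℝ := δ / (2 * K) with hδ'def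
  have hδ'pos : 0 < δ' := by positivity
  have key : ∀ n,
      {ω | ε ≤ dist
        ((∫ p, Function.invFun h ((inner ℝ x (βhat n (ω, p)) : ℝ)) * σ1 p ∂ν) /
         (∫ p, Function.invFun h ((inner ℝ x (βhat n (ω, p)) : ℝ)) * σ2 p ∂ν)) (T1 / T2)} ⊆
      {ω | δ' < ∫ p, ‖βhat n (ω, p) - β p‖ ∂ν} ∪
      {ω | ¬ Integrable (fun p => βhat n (ω, p)) ν} := by
    intro n ω hω
    by_cases hint : Integrable (fun p => βhat n (ω, p)) ν
    · left
      simp only [Set.mem_setOf_eq] at hω ⊢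
      by_contra hcon
      push_neg at hcon
      have hInn : 0 ≤ ∫ p, ‖βhat n (ω, p) - β p‖ ∂ν :=
        integral_nonneg fun p => norm_nonneg _
      have b1 := aux_bound hc hdiff hderiv ν σ1 hσ1meas hσ1 x β
        (fun p => βhat n (ω, p)) hβ hint
      have b2 := aux_bound hc hdiff hderiv ν σ2 hσ2meas hσ2 x β
        (fun p => βhat n (ω, p)) hβ hint
      have hKI : K * ∫ p, ‖βhat n (ω, p) - β p‖ ∂ν ≤ K * δ' :=
        mul_le_mul_of_nonneg_left hcon hKpos.le
      have hKδ : K * δ' < δ := by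
        rw [hδ'def]
        rw [mul_div_assoc']
        rw [div_lt_iff₀ (by positivity)]
        nlinarith
      have hd1 : dist (∫ p, Function.invFun h ((inner ℝ x (βhat n (ω, p)) : ℝ)) * σ1 p ∂ν)
          T1 < δ := by
        rw [Real.dist_eq]
        calc |(∫ p, Function.invFun h ((inner ℝ x (βhat n (ω, p)) : ℝ)) * σ1 p ∂ν) - T1|
            ≤ K * ∫ p, ‖βhat n (ω, p) - β p‖ ∂ν := b1
          _ ≤ K * δ' := hKI
          _ < δ := hKδ
      have hd2 : dist (∫ p, Function.invFun h ((inner ℝ x (βhat n (ω, p)) : ℝ)) * σ2 p ∂ν)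
          T2 < δ := by
        rw [Real.dist_eq]
        calc |(∫ p, Function.invFun h ((inner ℝ x (βhat n (ω, p)) : ℝ)) * σ2 p ∂ν) - T2|
            ≤ K * ∫ p, ‖βhat n (ω, p) - β p‖ ∂ν := b2
          _ ≤ K * δ' := hKI
          _ < δ := hKδ
      have hdpair : dist
          ((∫ p, Function.invFun h ((inner ℝ x (βhat n (ω, p)) : ℝ)) * σ1 p ∂ν),
           (∫ p, Function.invFun h ((inner ℝ x (βhat n (ω, p)) : ℝ)) * σ2 p ∂ν))
          ((T1, T2) : ℝ × ℝ) < δ := by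
        rw [Prod.dist_eq]
        exact max_lt hd1 hd2
      exact absurd (hδ hdpair) (not_lt.2 hω)
    · right
      exact hint
  refine tendsto_of_tendsto_of_tendsto_of_le_of_le tendsto_const_nhds (hcons δ' hδ'pos)
    (fun n => zero_le) (fun n => ?_)
  have h0 : P {ω | ¬ Integrable (fun p => βhat n (ω, p)) ν} = 0 := by
    have := hβhatint n
    rwa [ae_iff] at this
  calc P {ω | ε ≤ dist
        ((∫ p, Function.invFun h ((inner ℝ x (βhat n (ω, p)) : ℝ)) * σ1 p ∂ν) /
         (∫ p, Function.invFun h ((inner ℝ x (βhat n (ω, p)) : ℝ)) * σ2 p ∂ν)) (T1 / T2)}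
      ≤ P ({ω | δ' < ∫ p, ‖βhat n (ω, p) - β p‖ ∂ν} ∪
          {ω | ¬ Integrable (fun p => βhat n (ω, p)) ν}) := measure_mono (key n)
    _ ≤ P {ω | δ' < ∫ p, ‖βhat n (ω, p) - β p‖ ∂ν} +
        P {ω | ¬ Integrable (fun p => βhat n (ω, p)) ν} := measure_union_le _ _
    _ = P {ω | δ' < ∫ p, ‖βhat n (ω, p) - β p‖ ∂ν} := by rw [h0, add_zero]
end

section
/- Let g : (0,1) → ℝ satisfy g(1−p) = −g(p) for all p ∈ (0,1) and g(p) ≥ 0 for all p ∈ (1/2, 1). Let Q₁, Q₂ : (0,1) → ℝ be such that Q₁·g and Q₂·g are Lebesgue-integrable on (0,1), and suppose the difference Q₂ − Q₁ is nondecreasing on (0,1) (i.e., the distribution with quantile function Q₂ is at least as spread out as that with quantile function Q₁). Then ∫₀¹ Q₁(p) g(p) dp ≤ ∫₀¹ Q₂(p) g(p) dp; that is, scale L-functionals preserve the spread ordering of Bickel and Lehmann. -/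
open MeasureTheory Filter

/-- Scale L-functionals preserve the spread ordering of Bickel and Lehmann:
if g is skew-symmetric and nonnegative on (1/2,1), and Q₂ − Q₁ is nondecreasing,
then ∫₀¹ Q₁ g ≤ ∫₀¹ Q₂ g. -/
theorem stmt_11 (g Q₁ Q₂ : ℝ → ℝ)
    (hg : ∀ p ∈ Set.Ioo (0:ℝ) 1, g (1 - p) = -g p)
    (hgpos : ∀ p ∈ Set.Ioo (1/2 : ℝ) 1, 0 ≤ g p)
    (hQ1g : IntegrableOn (fun p => Q₁ p * g p) (Set.Ioo 0 1))
    (hQ2g : IntegrableOn (fun p => Q₂ p * g p) (Set.Ioo 0 1))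
    (hspread : MonotoneOn (fun p => Q₂ p - Q₁ p) (Set.Ioo (0:ℝ) 1)) :
    (∫ p in Set.Ioo (0:ℝ) 1, Q₁ p * g p)
      ≤ ∫ p in Set.Ioo (0:ℝ) 1, Q₂ p * g p := by
  set f : ℝ → ℝ := fun p => (Q₂ p - Q₁ p) * g p with hf
  have hfint : IntegrableOn f (Set.Ioo 0 1) := by
    simp only [hf, sub_mul]
    exact hQ2g.sub hQ1g
  rw [← sub_nonneg, ← integral_sub hQ2g hQ1g]
  have heq : ∀ x, Q₂ x * g x - Q₁ x * g x = f x := by intro x; simp [hf]; ring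
  simp_rw [heq]
  -- convert to interval integral
  have h01 : (∫ p in Set.Ioo (0:ℝ) 1, f p) = ∫ p in (0:ℝ)..1, f p := by
    rw [intervalIntegral.integral_of_le (by norm_num), integral_Ioc_eq_integral_Ioo]
  rw [h01]
  have hint1 : IntervalIntegrable f volume 0 (1/2) := by
    rw [intervalIntegrable_iff_integrableOn_Ioo_of_le (by norm_num)]
    exact hfint.mono_set (Set.Ioo_subset_Ioo le_rfl (by norm_num))
  have hint2 : IntervalIntegrable f volume (1/2) 1 := by
    rw [intervalIntegrable_iff_integrableOn_Ioo_of_le (by norm_num)]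
    exact hfint.mono_set (Set.Ioo_subset_Ioo (by norm_num) le_rfl)
  rw [← intervalIntegral.integral_add_adjacent_intervals hint1 hint2]
  have hsub : (∫ p in (0:ℝ)..(1/2), f p) = ∫ p in (1/2 : ℝ)..1, f (1 - p) := by
    rw [intervalIntegral.integral_comp_sub_left f 1]; norm_num
  rw [hsub]
  have hint2' : IntervalIntegrable (fun p => f (1 - p)) volume (1/2) 1 := by
    have := hint1.comp_sub_left 1
    norm_num at this
    exact this.symm
  rw [← intervalIntegral.integral_add hint2' hint2]
  rw [intervalIntegral.integral_of_le (by norm_num), integral_Ioc_eq_integral_Ioo]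
  apply setIntegral_nonneg measurableSet_Ioo
  intro x hx
  have hx1 : x ∈ Set.Ioo (0:ℝ) 1 := ⟨by linarith [hx.1], hx.2⟩
  have hx2 : (1 - x) ∈ Set.Ioo (0:ℝ) 1 := ⟨by linarith [hx.2], by linarith [hx.1]⟩
  have hgle : g (1 - x) = -g x := hg x hx1
  have hD : (Q₂ (1-x) - Q₁ (1-x)) ≤ (Q₂ x - Q₁ x) := hspread hx2 hx1 (by linarith [hx.1])
  have : f (1 - x) + f x = ((Q₂ x - Q₁ x) - (Q₂ (1-x) - Q₁ (1-x))) * g x := by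
    simp [hf, hgle]; ring
  rw [this]
  exact mul_nonneg (by linarith) (hgpos x hx)
end

section
/- Let g : (0,1) → ℝ be Lebesgue-integrable with g(1−p) = g(p) for all p ∈ (0,1) and ∫₀¹ g(p) dp = 0. Let Q : (0,1) → ℝ be such that Q·g is Lebesgue-integrable on (0,1). Then ∫₀¹ Q(p) g(p) dp = ∫_{1/2}^{1} [Q(p) + Q(1−p) − 2Q(1/2)] g(p) dp; that is, the unstandardized skewness functional is a weighted integral of the quantile-based skewness contrasts Q(p) + Q(1−p) − 2Q(1/2). -/
open MeasureTheory Filter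

private lemma ioo_eq_ii (h : ℝ → ℝ) {a b : ℝ} (hab : a ≤ b) :
    (∫ x in Set.Ioo a b, h x) = ∫ x in a..b, h x := by
  rw [intervalIntegral.integral_of_le hab, integral_Ioc_eq_integral_Ioo]

private lemma flip_int (h : ℝ → ℝ) :
    (∫ x in Set.Ioo (1/2 : ℝ) 1, h (1 - x)) = ∫ x in Set.Ioo (0:ℝ) (1/2), h x := by
  rw [ioo_eq_ii _ (by norm_num), ioo_eq_ii _ (by norm_num)]
  have := intervalIntegral.integral_comp_sub_left (a := (1/2:ℝ)) (b := 1) h 1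
  rw [show (1:ℝ) - 1 = 0 by norm_num, show (1:ℝ) - 1/2 = 1/2 by norm_num] at this
  exact this

/-- Identity (44) of the paper: for a symmetric weight density g integrating to
zero, the unstandardized skewness functional ∫₀¹ Q(p) g(p) dp equals the
weighted integral of the skewness contrasts Q(p) + Q(1−p) − 2Q(1/2) over
p ∈ (1/2, 1). -/
theorem stmt_12 (g Q : ℝ → ℝ)
    (hgint : IntegrableOn g (Set.Ioo 0 1))
    (hgsymm : ∀ p ∈ Set.Ioo (0:ℝ) 1, g (1 - p) = g p)
    (hgzero : (∫ p in Set.Ioo (0:ℝ) 1, g p) = 0)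
    (hQg : IntegrableOn (fun p => Q p * g p) (Set.Ioo 0 1)) :
    (∫ p in Set.Ioo (0:ℝ) 1, Q p * g p)
      = ∫ p in Set.Ioo (1/2 : ℝ) 1, (Q p + Q (1 - p) - 2 * Q (1/2)) * g p := by
  set f := fun p => Q p * g p with hfdef
  have hsub1 : Set.Ioo (1/2:ℝ) 1 ⊆ Set.Ioo 0 1 :=
    Set.Ioo_subset_Ioo (by norm_num) le_rfl
  have hsub0 : Set.Ioo (0:ℝ) (1/2) ⊆ Set.Ioo 0 1 :=
    Set.Ioo_subset_Ioo le_rfl (by norm_num)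
  -- integral of g over (1/2, 1) is zero
  have hg01 : (∫ p in Set.Ioo (0:ℝ) (1/2), g p) = ∫ p in Set.Ioo (1/2:ℝ) 1, g p := by
    rw [← flip_int g]
    exact setIntegral_congr_fun measurableSet_Ioo fun p hp => hgsymm p (hsub1 hp)
  have hsplitg : (∫ p in Set.Ioo (0:ℝ) 1, g p)
      = (∫ p in Set.Ioo (0:ℝ) (1/2), g p) + ∫ p in Set.Ioo (1/2:ℝ) 1, g p := by
    rw [ioo_eq_ii _ (by norm_num : (0:ℝ) ≤ 1), ioo_eq_ii _ (by norm_num : (0:ℝ) ≤ 1/2),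
      ioo_eq_ii _ (by norm_num : (1/2:ℝ) ≤ 1)]
    exact (intervalIntegral.integral_add_adjacent_intervals
      ((intervalIntegrable_iff_integrableOn_Ioo_of_le (by norm_num)).2 (hgint.mono_set hsub0))
      ((intervalIntegrable_iff_integrableOn_Ioo_of_le (by norm_num)).2 (hgint.mono_set hsub1))).symm
  have hghalf : (∫ p in Set.Ioo (1/2:ℝ) 1, g p) = 0 := by
    have h := hsplitg
    rw [hgzero, hg01] at h
    linarith
  -- split the LHS
  have hsplitf : (∫ p in Set.Ioo (0:ℝ) 1, f p)
      = (∫ p in Set.Ioo (0:ℝ) (1/2), f p) + ∫ p in Set.Ioo (1/2:ℝ) 1, f p := by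
    rw [ioo_eq_ii _ (by norm_num : (0:ℝ) ≤ 1), ioo_eq_ii _ (by norm_num : (0:ℝ) ≤ 1/2),
      ioo_eq_ii _ (by norm_num : (1/2:ℝ) ≤ 1)]
    exact (intervalIntegral.integral_add_adjacent_intervals
      ((intervalIntegrable_iff_integrableOn_Ioo_of_le (by norm_num)).2 (hQg.mono_set hsub0))
      ((intervalIntegrable_iff_integrableOn_Ioo_of_le (by norm_num)).2 (hQg.mono_set hsub1))).symm
  -- integrabilities on (1/2, 1)
  have hfI1 : IntegrableOn f (Set.Ioo (1/2:ℝ) 1) := hQg.mono_set hsub1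
  have hflipI : IntegrableOn (fun p => f (1 - p)) (Set.Ioo (1/2:ℝ) 1) := by
    have h0 : IntervalIntegrable f volume 0 (1/2) :=
      (intervalIntegrable_iff_integrableOn_Ioo_of_le (by norm_num)).2 (hQg.mono_set hsub0)
    have := h0.comp_sub_left 1
    norm_num at this
    exact (intervalIntegrable_iff_integrableOn_Ioo_of_le (by norm_num)).1 this.symm
  have hQ1g : IntegrableOn (fun p => Q (1 - p) * g p) (Set.Ioo (1/2:ℝ) 1) := by
    refine hflipI.congr_fun (fun p hp => ?_) measurableSet_Ioo
    simp only [hfdef]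
    rw [hgsymm p (hsub1 hp)]
  have hcg : IntegrableOn (fun p => 2 * Q (1/2) * g p) (Set.Ioo (1/2:ℝ) 1) :=
    (hgint.mono_set hsub1).const_mul _
  -- the flipped part
  have hflipeq : (∫ p in Set.Ioo (1/2:ℝ) 1, Q (1 - p) * g p)
      = ∫ p in Set.Ioo (0:ℝ) (1/2), f p := by
    rw [← flip_int f]
    refine setIntegral_congr_fun measurableSet_Ioo fun p hp => ?_
    simp only [hfdef]
    rw [hgsymm p (hsub1 hp)]
  -- expand the RHS
  have hexp : (∫ p in Set.Ioo (1/2:ℝ) 1, (Q p + Q (1 - p) - 2 * Q (1/2)) * g p)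
      = (∫ p in Set.Ioo (1/2:ℝ) 1, f p) + (∫ p in Set.Ioo (1/2:ℝ) 1, Q (1 - p) * g p)
        - ∫ p in Set.Ioo (1/2:ℝ) 1, 2 * Q (1/2) * g p := by
    have hcongr : (∫ p in Set.Ioo (1/2:ℝ) 1, (Q p + Q (1 - p) - 2 * Q (1/2)) * g p)
        = ∫ p in Set.Ioo (1/2:ℝ) 1, (f p + Q (1 - p) * g p) - 2 * Q (1/2) * g p := by
      refine setIntegral_congr_fun measurableSet_Ioo fun p _ => ?_
      simp only [hfdef]
      ring
    have hadd : IntegrableOn (fun p => f p + Q (1 - p) * g p) (Set.Ioo (1/2:ℝ) 1) :=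
      hfI1.add hQ1g
    rw [hcongr, integral_sub hadd hcg, integral_add hfI1 hQ1g]
  rw [hexp, hflipeq, integral_const_mul, hghalf, mul_zero, sub_zero, hsplitf]
  ring
end
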